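/- Suppose q ∈ L¹([L₁,L₂]) with κ = ‖q‖_{L¹}, and let K be the Volterra integral operator on L^∞([L₁,L₂]; ℂ²) with diagonal kernel K₁(x,y) = r(y)∫_y^x q(z)e^{2iζ(z−y)}dz, K₂(x,y) = q(y)∫_y^x r(z)e^{2iζ(x−z)}dz (zero for y > x), where r = −q* and Im ζ ≥ 0. Then the n-fold composition satisfies ‖K_n‖ ≤ κ^{2n}/(2n)!, and hence the resolvent R = Σ_{n≥1} K_n satisfies ‖R‖ ≤ cosh(κ) − 1. -/

import Mathlib

set_option maxHeartbeats 1000000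
open MeasureTheory intervalIntegral Set

lemma key_pow_integral (a b : ℝ) (hab : a ≤ b) (g : ℝ → ℝ)
    (hg : IntegrableOn g (Set.Icc a b)) :
    ∀ k : ℕ, ∀ x ∈ Set.Icc a b,
      (∫ y in a..x, g y * (∫ t in a..y, g t) ^ k)
        = (∫ t in a..x, g t) ^ (k + 1) / (k + 1) := by
  set Q : ℝ → ℝ := fun s => ∫ t in a..s, g t with hQdef
  have hQIoc : ∀ s, a ≤ s → Q s = ∫ t in Set.Ioc a s, g t := fun s hs =>
    intervalIntegral.integral_of_le hs
  have hQcont : ContinuousOn Q (Set.Icc a b) := by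
    have := intervalIntegral.continuousOn_primitive_interval
      (μ := volume) (a := a) (b := b) (f := g) (by rwa [Set.uIcc_of_le hab])
    rwa [Set.uIcc_of_le hab] at this
  have hfk : ∀ k : ℕ, IntegrableOn (fun y => g y * Q y ^ k) (Set.Icc a b) := fun k =>
    hg.mul_continuousOn (hQcont.pow k) isCompact_Icc
  have hfkI : ∀ k : ℕ, ∀ x ∈ Set.Icc a b, IntervalIntegrable (fun y => g y * Q y ^ k) volume a x := by
    intro k x hx
    have h1 : IntegrableOn (fun y => g y * Q y ^ k) (Set.uIcc a x) := by
      rw [Set.uIcc_of_le hx.1]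
      exact (hfk k).mono_set (Set.Icc_subset_Icc le_rfl hx.2)
    exact h1.intervalIntegrable
  intro k
  induction k with
  | zero =>
    intro x hx
    simp [Q]
  | succ k ih =>
    intro x hx
    have hax : a ≤ x := hx.1
    set f : ℝ → ℝ → ℝ := fun y t => if t ≤ y then g y * Q y ^ k * g t else 0 with hfdef
    have hsub : Set.Ioc a x ⊆ Set.Icc a b := fun y hy => ⟨le_of_lt hy.1, hy.2.trans hx.2⟩
    have huncurry : Integrable (Function.uncurry f)
        ((volume.restrict (Set.Ioc a x)).prod (volume.restrict (Set.Ioc a x))) := by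
      have hprod : Integrable (fun p : ℝ × ℝ => (g p.1 * Q p.1 ^ k) * g p.2)
          ((volume.restrict (Set.Ioc a x)).prod (volume.restrict (Set.Ioc a x))) :=
        Integrable.mul_prod ((hfk k).mono_set hsub) (hg.mono_set hsub)
      have heq : Function.uncurry f =
          ({p : ℝ × ℝ | p.2 ≤ p.1}).indicator (fun p => (g p.1 * Q p.1 ^ k) * g p.2) := by
        funext p
        simp only [Function.uncurry, hfdef, Set.indicator_apply, Set.mem_setOf_eq]
      rw [heq]
      exact hprod.indicator (measurableSet_le measurable_snd measurable_fst)
    have step1 : (∫ y in a..x, g y * Q y ^ (k+1))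
        = ∫ y in Set.Ioc a x, ∫ t in Set.Ioc a x, f y t := by
      rw [intervalIntegral.integral_of_le hax]
      apply setIntegral_congr_fun measurableSet_Ioc
      intro y hy
      calc g y * Q y ^ (k+1) = (g y * Q y ^ k) * Q y := by ring
        _ = (g y * Q y ^ k) * ∫ t in Set.Ioc a y, g t := by
            rw [hQIoc y (le_of_lt hy.1)]
        _ = ∫ t in Set.Ioc a y, (g y * Q y ^ k) * g t := by
            rw [MeasureTheory.integral_const_mul]
        _ = ∫ t in Set.Ioc a x ∩ Set.Iic y, (g y * Q y ^ k) * g t := by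
            rw [Set.Ioc_inter_Iic, min_eq_right hy.2]
        _ = ∫ t in Set.Ioc a x, (Set.Iic y).indicator (fun t => (g y * Q y ^ k) * g t) t := by
            rw [setIntegral_indicator measurableSet_Iic]
        _ = ∫ t in Set.Ioc a x, f y t := by
            apply setIntegral_congr_fun measurableSet_Ioc
            intro t _
            simp [hfdef, Set.indicator_apply]
    have step2 : (∫ y in Set.Ioc a x, ∫ t in Set.Ioc a x, f y t)
        = ∫ t in Set.Ioc a x, ∫ y in Set.Ioc a x, f y t :=
      MeasureTheory.integral_integral_swap huncurry
    have step3 : (∫ t in Set.Ioc a x, ∫ y in Set.Ioc a x, f y t)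
        = ∫ t in Set.Ioc a x, g t * (Q x ^ (k+1) / (k+1) - Q t ^ (k+1) / (k+1)) := by
      apply setIntegral_congr_fun measurableSet_Ioc
      intro t ht
      have hIcc : Set.Ioc a x ∩ Set.Ici t = Set.Icc t x := by
        ext y
        simp only [Set.mem_inter_iff, Set.mem_Ioc, Set.mem_Ici, Set.mem_Icc]
        constructor
        · rintro ⟨⟨_, h2⟩, h3⟩; exact ⟨h3, h2⟩
        · rintro ⟨h1', h2⟩; exact ⟨⟨lt_of_lt_of_le ht.1 h1', h2⟩, h1'⟩
      calc (∫ y in Set.Ioc a x, f y t)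
          = ∫ y in Set.Ioc a x, (Set.Ici t).indicator (fun y => (g y * Q y ^ k) * g t) y := by
            apply setIntegral_congr_fun measurableSet_Ioc
            intro y _
            simp [hfdef, Set.indicator_apply]
        _ = ∫ y in Set.Ioc a x ∩ Set.Ici t, (g y * Q y ^ k) * g t := by
            rw [setIntegral_indicator measurableSet_Ici]
        _ = ∫ y in Set.Ioc t x, (g y * Q y ^ k) * g t := by
            rw [hIcc, integral_Icc_eq_integral_Ioc]
        _ = ∫ y in t..x, (g y * Q y ^ k) * g t := by
            rw [intervalIntegral.integral_of_le ht.2]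
        _ = (∫ y in t..x, g y * Q y ^ k) * g t := by
            rw [intervalIntegral.integral_mul_const]
        _ = ((∫ y in a..x, g y * Q y ^ k) - ∫ y in a..t, g y * Q y ^ k) * g t := by
            rw [integral_interval_sub_left (hfkI k x hx) (hfkI k t ⟨le_of_lt ht.1, ht.2.trans hx.2⟩)]
        _ = (Q x ^ (k+1) / (k+1) - Q t ^ (k+1) / (k+1)) * g t := by
            rw [ih x hx, ih t ⟨le_of_lt ht.1, ht.2.trans hx.2⟩]
        _ = g t * (Q x ^ (k+1) / (k+1) - Q t ^ (k+1) / (k+1)) := by ring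
    have hgI : IntegrableOn g (Set.Ioc a x) := hg.mono_set hsub
    have hfk1I : IntegrableOn (fun y => g y * Q y ^ (k+1)) (Set.Ioc a x) :=
      (hfk (k+1)).mono_set hsub
    have step4 : (∫ t in Set.Ioc a x, g t * (Q x ^ (k+1) / (k+1) - Q t ^ (k+1) / (k+1)))
        = Q x * (Q x ^ (k+1) / (k+1)) - (∫ t in Set.Ioc a x, g t * Q t ^ (k+1)) / (k+1) := by
      have e1 : ∀ t : ℝ, g t * (Q x ^ (k+1) / (k+1) - Q t ^ (k+1) / (k+1))
          = g t * (Q x ^ (k+1) / (k+1)) - (g t * Q t ^ (k+1)) * (1 / ((k:ℝ)+1)) := by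
        intro t; push_cast; ring
      simp_rw [e1]
      rw [integral_sub (hgI.mul_const _) (hfk1I.mul_const _)]
      rw [MeasureTheory.integral_mul_const, MeasureTheory.integral_mul_const]
      rw [← hQIoc x hax]
      push_cast
      ring
    have hS : (∫ y in a..x, g y * Q y ^ (k+1)) = ∫ y in Set.Ioc a x, g y * Q y ^ (k+1) :=
      intervalIntegral.integral_of_le hax
    have key : (∫ y in Set.Ioc a x, g y * Q y ^ (k+1))
        = Q x * (Q x ^ (k+1) / (k+1)) - (∫ y in Set.Ioc a x, g y * Q y ^ (k+1)) / (k+1) := by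
      conv_lhs => rw [← hS, step1, step2, step3]
      rw [step4]
    show (∫ y in a..x, g y * Q y ^ (k+1)) = Q x ^ (k + 1 + 1) / (↑(k + 1) + 1)
    rw [hS]
    set S := ∫ y in Set.Ioc a x, g y * Q y ^ (k+1) with hSdef
    have hk1 : ((k:ℝ) + 1) ≠ 0 := by positivity
    have key2 : S * ((k:ℝ) + 1 + 1) = Q x ^ (k+1) * Q x := by
      field_simp at key
      nlinarith [key]
    push_cast
    rw [eq_div_iff (by positivity : ((k:ℝ) + 1 + 1) ≠ 0), pow_succ]
    linarith [key2]

lemma norm_intervalIntegral_le_of_le {h : ℝ → ℂ} {H : ℝ → ℝ} {a b : ℝ} (hab : a ≤ b)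
    (hH : IntervalIntegrable H volume a b)
    (hbd : ∀ y ∈ Set.Icc a b, ‖h y‖ ≤ H y) :
    ‖∫ y in a..b, h y‖ ≤ ∫ y in a..b, H y := by
  by_cases hint : IntervalIntegrable h volume a b
  · refine le_trans (intervalIntegral.norm_integral_le_integral_norm hab) ?_
    exact intervalIntegral.integral_mono_on hab hint.norm hH hbd
  · rw [intervalIntegral.integral_undef hint, norm_zero]
    exact intervalIntegral.integral_nonneg hab fun u hu => le_trans (norm_nonneg _) (hbd u hu)

lemma exp_re_eq (ζ : ℂ) (w : ℝ) : (2 * Complex.I * ζ * (w:ℂ)).re = -2 * ζ.im * w := by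
  simp [Complex.mul_re, Complex.mul_im]

lemma norm_exp_le_one (ζ : ℂ) (hζ : 0 ≤ ζ.im) (w : ℝ) (hw : 0 ≤ w) :
    ‖Complex.exp (2 * Complex.I * ζ * (w : ℂ))‖ ≤ 1 := by
  rw [Complex.norm_exp, exp_re_eq]
  rw [Real.exp_le_one_iff]
  nlinarith

lemma aux_fac (n : ℕ) : ((2*(n+1)).factorial : ℝ)
    = (((2*n : ℕ):ℝ) + 1 + 1) * (((2*n : ℕ):ℝ) + 1) * ((2*n).factorial : ℝ) := by
  have h : 2*(n+1) = (2*n + 1) + 1 := by ring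
  rw [h, Nat.factorial_succ, Nat.factorial_succ]
  push_cast
  ring

open MeasureTheory

theorem volterra_iterate_and_resolvent_bound (L₁ L₂ : ℝ) (q : ℝ → ℂ) (ζ : ℂ)
    (hζ : 0 ≤ ζ.im) (hq : IntegrableOn q (Set.Icc L₁ L₂)) :
    let r : ℝ → ℂ := fun t => -(starRingEnd ℂ) (q t)
    let κ : ℝ := ∫ x in Set.Icc L₁ L₂, ‖q x‖
    let K1 : ℝ → ℝ → ℂ := fun x y =>
      r y * ∫ t in y..x, q t * Complex.exp (2 * Complex.I * ζ * ((t : ℂ) - (y : ℂ)))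
    let K2 : ℝ → ℝ → ℂ := fun x y =>
      q y * ∫ t in y..x, r t * Complex.exp (2 * Complex.I * ζ * ((x : ℂ) - (t : ℂ)))
    let Kop : (ℝ → Fin 2 → ℂ) → (ℝ → Fin 2 → ℂ) := fun f x =>
      ![∫ y in L₁..x, K1 x y * f y 0, ∫ y in L₁..x, K2 x y * f y 1]
    ∀ f : ℝ → Fin 2 → ℂ, (∀ x ∈ Set.Icc L₁ L₂, ‖f x‖ ≤ 1) →
      (∀ n : ℕ, ∀ x ∈ Set.Icc L₁ L₂,
        ‖(Kop^[n + 1]) f x‖ ≤ κ ^ (2 * (n + 1)) / (Nat.factorial (2 * (n + 1)) : ℝ))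
      ∧ ∀ x ∈ Set.Icc L₁ L₂,
          ‖∑' n : ℕ, (Kop^[n + 1]) f x‖ ≤ Real.cosh κ - 1 := by
  intro r κ K1 K2 Kop f hf
  by_cases hab : L₁ ≤ L₂
  swap
  · constructor
    · intro n x hx; exact absurd (hx.1.trans hx.2) hab
    · intro x hx; exact absurd (hx.1.trans hx.2) hab
  set g : ℝ → ℝ := fun s => ‖q s‖ with hgdef
  have hg : IntegrableOn g (Set.Icc L₁ L₂) := by
    have := hq.norm
    exact this
  set Q : ℝ → ℝ := fun s => ∫ t in L₁..s, g t with hQdef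
  have hQcont : ContinuousOn Q (Set.Icc L₁ L₂) := by
    have := intervalIntegral.continuousOn_primitive_interval
      (μ := volume) (a := L₁) (b := L₂) (f := g) (by rwa [Set.uIcc_of_le hab])
    rwa [Set.uIcc_of_le hab] at this
  have hgI : ∀ y ∈ Set.Icc L₁ L₂, ∀ x ∈ Set.Icc L₁ L₂, IntervalIntegrable g volume y x := by
    intro y hy x hx
    have h1 : IntegrableOn g (Set.uIcc y x) := by
      exact hg.mono_set (Set.uIcc_subset_Icc hy hx)
    exact h1.intervalIntegrable
  have hfkI : ∀ k : ℕ, ∀ x ∈ Set.Icc L₁ L₂, IntervalIntegrable (fun y => g y * Q y ^ k) volume L₁ x := by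
    intro k x hx
    have h1 : IntegrableOn (fun y => g y * Q y ^ k) (Set.uIcc L₁ x) := by
      rw [Set.uIcc_of_le hx.1]
      exact (hg.mul_continuousOn (hQcont.pow k) isCompact_Icc).mono_set
        (Set.Icc_subset_Icc le_rfl hx.2)
    exact h1.intervalIntegrable
  have hQ0 : ∀ x ∈ Set.Icc L₁ L₂, 0 ≤ Q x := by
    intro x hx
    exact intervalIntegral.integral_nonneg hx.1 fun u _ => norm_nonneg _
  have hQsub : ∀ y ∈ Set.Icc L₁ L₂, ∀ x ∈ Set.Icc L₁ L₂, Q x - Q y = ∫ t in y..x, g t := by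
    intro y hy x hx
    exact intervalIntegral.integral_interval_sub_left (hgI L₁ ⟨le_rfl, hab⟩ x hx)
      (hgI L₁ ⟨le_rfl, hab⟩ y hy)
  have hκQ : κ = Q L₂ := by
    show (∫ x in Set.Icc L₁ L₂, ‖q x‖) = Q L₂
    rw [MeasureTheory.integral_Icc_eq_integral_Ioc]
    exact (intervalIntegral.integral_of_le hab).symm
  have hQκ : ∀ x ∈ Set.Icc L₁ L₂, Q x ≤ κ := by
    intro x hx
    rw [hκQ]
    have h1 : Q L₂ - Q x = ∫ t in x..L₂, g t := hQsub x hx L₂ ⟨hab, le_rfl⟩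
    have h2 : 0 ≤ ∫ t in x..L₂, g t :=
      intervalIntegral.integral_nonneg hx.2 fun u _ => norm_nonneg _
    linarith
  have hκ0 : 0 ≤ κ := le_trans (hQ0 L₁ ⟨le_rfl, hab⟩) (hQκ L₁ ⟨le_rfl, hab⟩)
  -- kernel bounds
  have hK1bd : ∀ x ∈ Set.Icc L₁ L₂, ∀ y ∈ Set.Icc L₁ x, ‖K1 x y‖ ≤ g y * (Q x - Q y) := by
    intro x hx y hy
    have hyI : y ∈ Set.Icc L₁ L₂ := ⟨hy.1, hy.2.trans hx.2⟩
    show ‖r y * ∫ t in y..x, q t * Complex.exp (2 * Complex.I * ζ * ((t : ℂ) - (y : ℂ)))‖ ≤ _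
    rw [norm_mul]
    have hr : ‖r y‖ = g y := by
      show ‖-(starRingEnd ℂ) (q y)‖ = _
      rw [norm_neg, RCLike.norm_conj]
    rw [hr, hQsub y hyI x hx]
    apply mul_le_mul_of_nonneg_left _ (norm_nonneg _)
    apply norm_intervalIntegral_le_of_le hy.2 (hgI y hyI x hx)
    intro t ht
    rw [norm_mul]
    have he : ((t : ℂ) - (y : ℂ)) = ((t - y : ℝ) : ℂ) := by push_cast; ring
    rw [he]
    have := norm_exp_le_one ζ hζ (t - y) (by linarith [ht.1])
    have h2 : ‖q t‖ = g t := rfl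
    nlinarith [norm_nonneg (q t), norm_nonneg (Complex.exp (2 * Complex.I * ζ * ((t - y : ℝ) : ℂ)))]
  have hK2bd : ∀ x ∈ Set.Icc L₁ L₂, ∀ y ∈ Set.Icc L₁ x, ‖K2 x y‖ ≤ g y * (Q x - Q y) := by
    intro x hx y hy
    have hyI : y ∈ Set.Icc L₁ L₂ := ⟨hy.1, hy.2.trans hx.2⟩
    show ‖q y * ∫ t in y..x, r t * Complex.exp (2 * Complex.I * ζ * ((x : ℂ) - (t : ℂ)))‖ ≤ _
    rw [norm_mul, hQsub y hyI x hx]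
    apply mul_le_mul_of_nonneg_left _ (norm_nonneg _)
    apply norm_intervalIntegral_le_of_le hy.2 (hgI y hyI x hx)
    intro t ht
    rw [norm_mul]
    have he : ((x : ℂ) - (t : ℂ)) = ((x - t : ℝ) : ℂ) := by push_cast; ring
    rw [he]
    have := norm_exp_le_one ζ hζ (x - t) (by linarith [ht.2])
    have hr : ‖r t‖ = g t := by
      show ‖-(starRingEnd ℂ) (q t)‖ = _
      rw [norm_neg, RCLike.norm_conj]
    nlinarith [norm_nonneg (r t), norm_nonneg (Complex.exp (2 * Complex.I * ζ * ((x - t : ℝ) : ℂ)))]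
  -- main induction
  have main : ∀ n : ℕ, ∀ x ∈ Set.Icc L₁ L₂,
      ‖(Kop^[n]) f x‖ ≤ Q x ^ (2*n) / ((2*n).factorial : ℝ) := by
    intro n
    induction n with
    | zero =>
      intro x hx
      simpa using hf x hx
    | succ n ih =>
      intro x hx
      rw [Function.iterate_succ_apply']
      set G := Kop^[n] f with hGdef
      have hG : ∀ y ∈ Set.Icc L₁ L₂, ∀ i, ‖G y i‖ ≤ Q y ^ (2*n) / ((2*n).factorial : ℝ) :=
        fun y hy i => le_trans (norm_le_pi_norm (G y) i) (ih y hy)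
      set c : ℝ := (((2*n).factorial : ℝ))⁻¹ with hcdef
      have hc0 : 0 ≤ c := by positivity
      set H : ℝ → ℝ := fun y => (g y * ((Q x - Q y) * Q y ^ (2*n))) * c with hHdef
      have hHint : IntervalIntegrable H volume L₁ x := by
        have h1 : IntegrableOn (fun y => g y * ((Q x - Q y) * Q y ^ (2*n))) (Set.uIcc L₁ x) := by
          rw [Set.uIcc_of_le hx.1]
          apply IntegrableOn.mul_continuousOn
          · exact hg.mono_set (Set.Icc_subset_Icc le_rfl hx.2)
          · exact (continuousOn_const.sub (hQcont.mono (Set.Icc_subset_Icc le_rfl hx.2))).mul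
              ((hQcont.mono (Set.Icc_subset_Icc le_rfl hx.2)).pow _)
          · exact isCompact_Icc
        exact (h1.intervalIntegrable).mul_const _
      have hcomp : ∀ h1 : ℝ → ℂ, (∀ y ∈ Set.Icc L₁ x, ‖h1 y‖ ≤ H y) →
          ‖∫ y in L₁..x, h1 y‖ ≤ ∫ y in L₁..x, H y :=
        fun h1 hbd => norm_intervalIntegral_le_of_le hx.1 hHint hbd
      have hptbd : ∀ (KK : ℝ → ℝ → ℂ), (∀ y ∈ Set.Icc L₁ x, ‖KK x y‖ ≤ g y * (Q x - Q y)) →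
          ∀ i : Fin 2, ∀ y ∈ Set.Icc L₁ x, ‖KK x y * G y i‖ ≤ H y := by
        intro KK hKK i y hy
        have hyI : y ∈ Set.Icc L₁ L₂ := ⟨hy.1, hy.2.trans hx.2⟩
        rw [norm_mul]
        have h1 := hKK y hy
        have h2 := hG y hyI i
        have h3 : 0 ≤ g y * (Q x - Q y) := le_trans (norm_nonneg _) h1
        have h4 : Q y ^ (2*n) / ((2*n).factorial : ℝ) = Q y ^ (2*n) * c := by
          rw [hcdef, div_eq_mul_inv]
        calc ‖KK x y‖ * ‖G y i‖ ≤ (g y * (Q x - Q y)) * (Q y ^ (2*n) / ((2*n).factorial : ℝ)) := by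
              apply mul_le_mul h1 h2 (norm_nonneg _) h3
          _ = H y := by rw [h4, hHdef]; ring
      have hval : (∫ y in L₁..x, H y) = Q x ^ (2*(n+1)) / ((2*(n+1)).factorial : ℝ) := by
        have e1 : ∀ y : ℝ, H y = (g y * Q y ^ (2*n)) * (Q x * c) - (g y * Q y ^ (2*n+1)) * c := by
          intro y; rw [hHdef]; ring
        simp_rw [e1]
        rw [intervalIntegral.integral_sub ((hfkI (2*n) x hx).mul_const _)
          ((hfkI (2*n+1) x hx).mul_const _)]
        rw [intervalIntegral.integral_mul_const, intervalIntegral.integral_mul_const]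
        have k1 := key_pow_integral L₁ L₂ hab g hg (2*n) x hx
        have k2 := key_pow_integral L₁ L₂ hab g hg (2*n+1) x hx
        simp only [hQdef]
        rw [k1, k2, hcdef]
        rw [aux_fac n]
        have h1 : (0:ℝ) < ((2*n).factorial : ℝ) := by positivity
        have h2 : (0:ℝ) < ((2*n : ℕ):ℝ) + 1 := by positivity
        field_simp
        push_cast; ring
      have hrhs0 : 0 ≤ Q x ^ (2*(n+1)) / ((2*(n+1)).factorial : ℝ) := by
        have := hQ0 x hx; positivity
      rw [show (2*(n+1)) = 2*n+1+1 from by ring] at hrhs0 ⊢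
      rw [pi_norm_le_iff_of_nonneg hrhs0]
      intro i
      have hvv : (∫ y in L₁..x, H y) = Q x ^ (2*n+1+1) / ((2*n+1+1).factorial : ℝ) := by
        rw [hval, show (2*(n+1)) = 2*n+1+1 from by ring]
      fin_cases i
      · show ‖∫ y in L₁..x, K1 x y * G y 0‖ ≤ _
        rw [← hvv]
        exact hcomp _ (hptbd K1 (hK1bd x hx) 0)
      · show ‖∫ y in L₁..x, K2 x y * G y 1‖ ≤ _
        rw [← hvv]
        exact hcomp _ (hptbd K2 (hK2bd x hx) 1)
  have mainκ : ∀ n : ℕ, ∀ x ∈ Set.Icc L₁ L₂,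
      ‖(Kop^[n+1]) f x‖ ≤ κ ^ (2*(n+1)) / ((2*(n+1)).factorial : ℝ) := by
    intro n x hx
    refine le_trans (main (n+1) x hx) ?_
    gcongr
    · exact hQ0 x hx
    · exact hQκ x hx
  constructor
  · exact mainκ
  · intro x hx
    have hsum1 : Summable (fun m : ℕ => κ ^ (2*m) / ((2*m).factorial : ℝ)) :=
      (Real.hasSum_cosh κ).summable
    have hsum : Summable (fun n : ℕ => κ ^ (2*(n+1)) / ((2*(n+1)).factorial : ℝ)) := by
      have := (summable_nat_add_iff (f := fun m : ℕ => κ ^ (2*m) / ((2*m).factorial : ℝ)) 1).2 hsum1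
      simpa using this
    have hsnorm : Summable (fun n : ℕ => ‖(Kop^[n+1]) f x‖) :=
      Summable.of_nonneg_of_le (fun n => norm_nonneg _) (fun n => mainκ n x hx) hsum
    calc ‖∑' n : ℕ, (Kop^[n+1]) f x‖ ≤ ∑' n : ℕ, ‖(Kop^[n+1]) f x‖ :=
          norm_tsum_le_tsum_norm hsnorm
      _ ≤ ∑' n : ℕ, κ ^ (2*(n+1)) / ((2*(n+1)).factorial : ℝ) :=
          Summable.tsum_le_tsum (fun n => mainκ n x hx) hsnorm hsum
      _ = Real.cosh κ - 1 := by
          have h0 : Real.cosh κ = κ ^ (2*0) / ((2*0).factorial : ℝ)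
              + ∑' n : ℕ, κ ^ (2*(n+1)) / ((2*(n+1)).factorial : ℝ) := by
            rw [Real.cosh_eq_tsum]
            exact Summable.tsum_eq_zero_add hsum1
          simp only [Nat.mul_zero, pow_zero, Nat.factorial_zero, Nat.cast_one, div_one] at h0
          linarith
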